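/- Under the Bounded-Coefficient Scheme Hypotheses, assume additionally that all the maps T_1, …, T_m and I_1, …, I_m are continuous. Then lim_{n→∞} ‖x_{n+1} − x_n‖ = 0. -/

import Mathlib

open Filter

section Helpers
open Finset

/-- Convergence of sequences satisfying a quasi-Fejér type recursion. -/
lemma quasi_conv (a σ θ : ℕ → ℝ) (ha : ∀ n, 0 ≤ a n) (hσ0 : ∀ n, 0 ≤ σ n)
    (hθ0 : ∀ n, 0 ≤ θ n) (hσ : Summable σ) (hθ : Summable θ)
    (hrec : ∀ n, a (n + 1) ≤ (1 + σ n) * a n + θ n) :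
    ∃ c, Tendsto a atTop (nhds c) := by
  set B := (a 0 + ∑' k, θ k) * Real.exp (∑' k, σ k) with hB
  have htθ : 0 ≤ ∑' k, θ k := tsum_nonneg hθ0
  have hB0 : 0 ≤ B := mul_nonneg (add_nonneg (ha 0) htθ) (Real.exp_pos _).le
  have habd : ∀ n, a n ≤ B := by
    have key : ∀ n, a n ≤ (a 0 + ∑ k ∈ range n, θ k) * ∏ k ∈ range n, (1 + σ k) := by
      intro n
      induction n with
      | zero => simp
      | succ n ih =>
        rw [Finset.prod_range_succ, Finset.sum_range_succ]
        have h1 : (1 : ℝ) ≤ ∏ k ∈ range n, (1 + σ k) := by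
          calc (1:ℝ) = ∏ _k ∈ range n, (1:ℝ) := by simp
            _ ≤ ∏ k ∈ range n, (1 + σ k) :=
              Finset.prod_le_prod (fun k _ => zero_le_one) (fun k _ => by linarith [hσ0 k])
        have h2 : (0 : ℝ) ≤ a 0 + ∑ k ∈ range n, θ k :=
          add_nonneg (ha 0) (Finset.sum_nonneg fun k _ => hθ0 k)
        have e1 : (1 + σ n) * a n ≤ (1 + σ n) * ((a 0 + ∑ k ∈ range n, θ k) * ∏ k ∈ range n, (1 + σ k)) :=
          mul_le_mul_of_nonneg_left ih (by linarith [hσ0 n])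
        have e2 : (1:ℝ) ≤ (∏ k ∈ range n, (1 + σ k)) * (1 + σ n) := by nlinarith [hσ0 n]
        have e3 : θ n ≤ θ n * ((∏ k ∈ range n, (1 + σ k)) * (1 + σ n)) := by
          nlinarith [hθ0 n]
        nlinarith [hrec n, hσ0 n, hθ0 n, ha n]
    intro n
    refine (key n).trans ?_
    have h1 : ∑ k ∈ range n, θ k ≤ ∑' k, θ k :=
      Summable.sum_le_tsum _ (fun k _ => hθ0 k) hθ
    have h2 : ∏ k ∈ range n, (1 + σ k) ≤ Real.exp (∑' k, σ k) := by
      calc ∏ k ∈ range n, (1 + σ k) ≤ ∏ k ∈ range n, Real.exp (σ k) :=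
            Finset.prod_le_prod (fun k _ => by linarith [hσ0 k])
              (fun k _ => by linarith [Real.add_one_le_exp (σ k)])
        _ = Real.exp (∑ k ∈ range n, σ k) := (Real.exp_sum _ _).symm
        _ ≤ Real.exp (∑' k, σ k) :=
            Real.exp_le_exp.2 (Summable.sum_le_tsum _ (fun k _ => hσ0 k) hσ)
    have h3 : (0 : ℝ) ≤ a 0 + ∑ k ∈ range n, θ k :=
      add_nonneg (ha 0) (Finset.sum_nonneg fun k _ => hθ0 k)
    have h4 : (0 : ℝ) ≤ ∏ k ∈ range n, (1 + σ k) :=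
      Finset.prod_nonneg fun k _ => by linarith [hσ0 k]
    rw [hB]
    exact mul_le_mul (by linarith) h2 h4 (by linarith)
  set g : ℕ → ℝ := fun k => B * σ k + θ k with hg
  have hgs : Summable g := (hσ.mul_left B).add hθ
  have hg0 : ∀ k, 0 ≤ g k := fun k => add_nonneg (mul_nonneg hB0 (hσ0 k)) (hθ0 k)
  set tl : ℕ → ℝ := fun n => ∑' k, g (k + n) with htl
  have htl0 : ∀ n, 0 ≤ tl n := fun n => tsum_nonneg fun k => hg0 _
  have htll : Tendsto tl atTop (nhds 0) := tendsto_sum_nat_add g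
  have hsplit : ∀ n, tl n = g n + tl (n + 1) := by
    intro n
    have hs : Summable fun k => g (k + n) := (summable_nat_add_iff n).2 hgs
    have := Summable.tsum_eq_zero_add hs
    simp only [zero_add] at this
    rw [htl]
    simp only []
    rw [this]
    congr 1
    apply tsum_congr
    intro b
    congr 1
    omega
  have hanti : Antitone fun n => a n + tl n := by
    apply antitone_nat_of_succ_le
    intro n
    have h1 := hrec n
    have h2 : σ n * a n ≤ σ n * B := mul_le_mul_of_nonneg_left (habd n) (hσ0 n)
    have h3 := hsplit n
    simp only [hg] at h3
    nlinarith
  have hbdd : BddBelow (Set.range fun n => a n + tl n) := by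
    refine ⟨0, ?_⟩
    rintro _ ⟨n, rfl⟩
    exact add_nonneg (ha n) (htl0 n)
  have hconv := tendsto_atTop_ciInf hanti hbdd
  refine ⟨⨅ i, (a i + tl i), ?_⟩
  have hfin : Tendsto (fun n => (a n + tl n) - tl n) atTop (nhds ((⨅ i, (a i + tl i)) - 0)) :=
    hconv.sub htll
  rw [sub_zero] at hfin
  exact hfin.congr fun n => by ring

/-- Uniform convexity for convex combinations with coefficients bounded away from 0 and 1. -/
lemma uc_combo (X : Type*) [NormedAddCommGroup X] [NormedSpace ℝ X] [UniformConvexSpace X]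
    {ε α β : ℝ} (hε : 0 < ε) (hα : 0 < α) (hβ : β < 1) :
    ∃ δ, 0 < δ ∧ ∀ t, α ≤ t → t ≤ β → ∀ x y : X, ‖x‖ ≤ 1 → ‖y‖ ≤ 1 → ε ≤ ‖x - y‖ →
      ‖t • x + (1 - t) • y‖ ≤ 1 - δ := by
  obtain ⟨δ, hδ, H⟩ := exists_forall_closed_ball_dist_add_le_two_sub X hε
  by_cases hab : α ≤ β
  case neg =>
    exact ⟨1, one_pos, fun t ht1 ht2 => absurd (ht1.trans ht2) hab⟩
  have hm0 : 0 < min α (1 - β) := lt_min hα (by linarith)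
  refine ⟨min α (1 - β) * (δ / 2), by positivity, fun t htα htβ x y hx hy hxy => ?_⟩
  have hsum := H hx hy hxy
  have ht0 : 0 < t := hα.trans_le htα
  have ht1 : t < 1 := lt_of_le_of_lt htβ hβ
  rcases le_or_gt t (1 / 2) with h | h
  · have hid : t • x + (1 - t) • y = t • (x + y) + (1 - 2 * t) • y := by module
    rw [hid]
    have hc : ‖t • (x + y) + (1 - 2 * t) • y‖ ≤ t * ‖x + y‖ + (1 - 2 * t) * ‖y‖ := by
      refine (norm_add_le _ _).trans ?_
      rw [norm_smul, norm_smul, Real.norm_of_nonneg ht0.le,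
        Real.norm_of_nonneg (by linarith : (0:ℝ) ≤ 1 - 2 * t)]
    have h2 : t * ‖x + y‖ ≤ t * (2 - δ) := mul_le_mul_of_nonneg_left hsum ht0.le
    have h3 : (1 - 2 * t) * ‖y‖ ≤ (1 - 2 * t) * 1 :=
      mul_le_mul_of_nonneg_left hy (by linarith)
    have hmin : min α (1 - β) ≤ t := (min_le_left _ _).trans htα
    nlinarith
  · have hid : t • x + (1 - t) • y = (1 - t) • (x + y) + (2 * t - 1) • x := by module
    rw [hid]
    have hc : ‖(1 - t) • (x + y) + (2 * t - 1) • x‖ ≤ (1 - t) * ‖x + y‖ + (2 * t - 1) * ‖x‖ := by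
      refine (norm_add_le _ _).trans ?_
      rw [norm_smul, norm_smul, Real.norm_of_nonneg (by linarith : (0:ℝ) ≤ 1 - t),
        Real.norm_of_nonneg (by linarith : (0:ℝ) ≤ 2 * t - 1)]
    have h2 : (1 - t) * ‖x + y‖ ≤ (1 - t) * (2 - δ) :=
      mul_le_mul_of_nonneg_left hsum (by linarith)
    have h3 : (2 * t - 1) * ‖x‖ ≤ (2 * t - 1) * 1 :=
      mul_le_mul_of_nonneg_left hx (by linarith)
    have hmin : min α (1 - β) ≤ 1 - t := by
      have := min_le_right α (1 - β); linarith
    nlinarith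

/-- Schu-type lemma in uniformly convex spaces. -/
lemma schu_lemma {X : Type*} [NormedAddCommGroup X] [NormedSpace ℝ X] [UniformConvexSpace X]
    {c α β : ℝ} (hα : 0 < α) (hβ : β < 1)
    (t : ℕ → ℝ) (ht : ∀ n, t n ∈ Set.Icc α β) (u v : ℕ → X)
    (hu : ∀ ε > (0:ℝ), ∀ᶠ n in atTop, ‖u n‖ ≤ c + ε)
    (hv : ∀ ε > (0:ℝ), ∀ᶠ n in atTop, ‖v n‖ ≤ c + ε)
    (hw : Tendsto (fun n => ‖t n • u n + (1 - t n) • v n‖) atTop (nhds c)) :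
    Tendsto (fun n => u n - v n) atTop (nhds 0) := by
  have hc : 0 ≤ c := ge_of_tendsto' hw fun n => norm_nonneg _
  rw [NormedAddCommGroup.tendsto_nhds_zero]
  intro ε hε
  rcases eq_or_lt_of_le hc with hc0 | hc0
  · filter_upwards [hu (ε / 3) (by positivity), hv (ε / 3) (by positivity)] with n h1 h2
    have h3 := norm_sub_le (u n) (v n)
    rw [← hc0] at h1 h2
    linarith
  · obtain ⟨δ, hδ, H⟩ := uc_combo X (ε := ε / (c + 1)) (by positivity) hα hβ
    set η := min 1 (δ * c / 2) with hη
    have hη0 : 0 < η := lt_min one_pos (by positivity)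
    have hη1 : η ≤ 1 := min_le_left _ _
    have hη2 : η ≤ δ * c / 2 := min_le_right _ _
    set R := c + η with hR
    have hR0 : 0 < R := by positivity
    have hRc1 : R ≤ c + 1 := by linarith
    have hkey : R * (1 - δ) < c := by nlinarith
    filter_upwards [hu η hη0, hv η hη0, hw.eventually_const_lt hkey] with n h1 h2 h3
    by_contra hcon
    push_neg at hcon
    have hx : ‖R⁻¹ • u n‖ ≤ 1 := by
      rw [norm_smul, Real.norm_of_nonneg (inv_nonneg.2 hR0.le)]
      calc R⁻¹ * ‖u n‖ ≤ R⁻¹ * R := by gcongr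
        _ = 1 := inv_mul_cancel₀ hR0.ne'
    have hy : ‖R⁻¹ • v n‖ ≤ 1 := by
      rw [norm_smul, Real.norm_of_nonneg (inv_nonneg.2 hR0.le)]
      calc R⁻¹ * ‖v n‖ ≤ R⁻¹ * R := by gcongr
        _ = 1 := inv_mul_cancel₀ hR0.ne'
    have hxy : ε / (c + 1) ≤ ‖R⁻¹ • u n - R⁻¹ • v n‖ := by
      rw [← smul_sub, norm_smul, Real.norm_of_nonneg (inv_nonneg.2 hR0.le)]
      calc ε / (c + 1) ≤ ε / R := by gcongr
        _ = R⁻¹ * ε := by rw [div_eq_inv_mul]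
        _ ≤ R⁻¹ * ‖u n - v n‖ := by gcongr
    have hH := H (t n) (ht n).1 (ht n).2 _ _ hx hy hxy
    have hcomb : t n • (R⁻¹ • u n) + (1 - t n) • (R⁻¹ • v n)
        = R⁻¹ • (t n • u n + (1 - t n) • v n) := by module
    rw [hcomb, norm_smul, Real.norm_of_nonneg (inv_nonneg.2 hR0.le)] at hH
    have hfin : ‖t n • u n + (1 - t n) • v n‖ ≤ R * (1 - δ) := by
      have := mul_le_mul_of_nonneg_left hH hR0.le
      rw [← mul_assoc, mul_inv_cancel₀ hR0.ne', one_mul] at this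
      linarith
    linarith


end Helpers

set_option maxHeartbeats 2000000 in

/-- under the bounded-coefficient scheme hypotheses with all maps
continuous, `lim ‖x (n+1) - x n‖ = 0`. -/
theorem stmt10
    {X : Type*} [NormedAddCommGroup X] [NormedSpace ℝ X] [CompleteSpace X]
    [UniformConvexSpace X]
    {K : Set X} (hKne : K.Nonempty) (hKcl : IsClosed K) (hKco : Convex ℝ K)
    {m : ℕ} (hm : 1 ≤ m)
    (T I : Fin m → X → X)
    (hTK : ∀ i, Set.MapsTo (T i) K K) (hIK : ∀ i, Set.MapsTo (I i) K K)
    (hTcont : ∀ i, ContinuousOn (T i) K) (hIcont : ∀ i, ContinuousOn (I i) K)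
    (μ lam tμ tlam : Fin m → ℕ → ℝ)
    (hμ0 : ∀ i n, 0 ≤ μ i n) (hlam0 : ∀ i n, 0 ≤ lam i n)
    (htμ0 : ∀ i n, 0 ≤ tμ i n) (htlam0 : ∀ i n, 0 ≤ tlam i n)
    (hμlim : ∀ i, Tendsto (μ i) atTop (nhds 0)) (hlamlim : ∀ i, Tendsto (lam i) atTop (nhds 0))
    (htμlim : ∀ i, Tendsto (tμ i) atTop (nhds 0))
    (htlamlim : ∀ i, Tendsto (tlam i) atTop (nhds 0))
    (hμsum : ∀ i, Summable (μ i)) (hlamsum : ∀ i, Summable (lam i))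
    (htμsum : ∀ i, Summable (tμ i)) (htlamsum : ∀ i, Summable (tlam i))
    (φ ψ : Fin m → ℝ → ℝ)
    (hφmono : ∀ i, StrictMonoOn (φ i) (Set.Ici 0))
    (hφcont : ∀ i, ContinuousOn (φ i) (Set.Ici 0))
    (hφ0 : ∀ i, φ i 0 = 0) (hφpos : ∀ i t, 0 ≤ t → 0 ≤ φ i t)
    (hψmono : ∀ i, StrictMonoOn (ψ i) (Set.Ici 0))
    (hψcont : ∀ i, ContinuousOn (ψ i) (Set.Ici 0))
    (hψ0 : ∀ i, ψ i 0 = 0) (hψpos : ∀ i t, 0 ≤ t → 0 ≤ ψ i t)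
    (hI : ∀ i, ∀ n, 1 ≤ n → ∀ x ∈ K, ∀ y ∈ K,
      ‖(I i)^[n] x - (I i)^[n] y‖ ≤ ‖x - y‖ + tμ i n * ψ i ‖x - y‖ + tlam i n)
    (hT : ∀ i, ∀ n, 1 ≤ n → ∀ x ∈ K, ∀ y ∈ K,
      ‖(T i)^[n] x - (T i)^[n] y‖ ≤
        ‖(I i)^[n] x - (I i)^[n] y‖ + μ i n * φ i ‖(I i)^[n] x - (I i)^[n] y‖ + lam i n)
    (F : Set X)
    (hFdef : ∀ p, p ∈ F ↔ p ∈ K ∧ ∀ i, T i p = p ∧ I i p = p)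
    (hFne : F.Nonempty)
    (M Ms N Ns : Fin m → ℝ)
    (hM : ∀ i, 0 < M i) (hMs : ∀ i, 0 < Ms i) (hN : ∀ i, 0 < N i) (hNs : ∀ i, 0 < Ns i)
    (hφbound : ∀ i ξ, M i ≤ ξ → φ i ξ ≤ Ms i * ξ)
    (hψbound : ∀ i ζ, N i ≤ ζ → ψ i ζ ≤ Ns i * ζ)
    (alo ahi blo bhi : ℝ)
    (halo : 0 < alo) (hahi : alo < ahi) (hahi1 : ahi < 1)
    (hblo : 0 < blo) (hbhi : blo < bhi) (hbhi1 : bhi < 1)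
    (a b : Fin (m + 1) → ℕ → ℝ)
    (ha : ∀ j n, a j n ∈ Set.Icc alo ahi) (hb : ∀ j n, b j n ∈ Set.Icc blo bhi)
    (hasum : ∀ n, ∑ j, a j n = 1) (hbsum : ∀ n, ∑ j, b j n = 1)
    (x y : ℕ → X) (hx0 : x 0 ∈ K)
    (hy : ∀ n, y n = b 0 n • x n + ∑ i : Fin m, b i.succ n • (I i)^[n] (x n))
    (hxrec : ∀ n, x (n + 1) = a 0 n • x n + ∑ i : Fin m, a i.succ n • (T i)^[n] (y n))
    : Tendsto (fun n => ‖x (n + 1) - x n‖) atTop (nhds 0) := by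
  classical
  obtain ⟨p, hpF⟩ := hFne
  rw [hFdef] at hpF
  obtain ⟨hpK, hpfix⟩ := hpF
  have hIp : ∀ i n, (I i)^[n] p = p := fun i n => Function.iterate_fixed (hpfix i).2 n
  have hTp : ∀ i n, (T i)^[n] p = p := fun i n => Function.iterate_fixed (hpfix i).1 n
  -- membership of the iterates in K
  have hmemy : ∀ n, x n ∈ K → y n ∈ K := by
    intro n hxn
    rw [hy n]
    have hrw : b 0 n • x n + ∑ i : Fin m, b i.succ n • (I i)^[n] (x n)
        = ∑ j : Fin (m + 1), b j n • (Fin.cases (x n) (fun i => (I i)^[n] (x n)) j : X) := by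
      rw [Fin.sum_univ_succ]; simp
    rw [hrw]
    refine hKco.sum_mem (fun j _ => hblo.le.trans (hb j n).1) (hbsum n) (fun j _ => ?_)
    induction j using Fin.cases with
    | zero => simpa using hxn
    | succ i => simpa using (hIK i).iterate n hxn
  have hmemx : ∀ n, x n ∈ K := by
    intro n
    induction n with
    | zero => exact hx0
    | succ n ih =>
      rw [hxrec n]
      have hrw : a 0 n • x n + ∑ i : Fin m, a i.succ n • (T i)^[n] (y n)
          = ∑ j : Fin (m + 1), a j n • (Fin.cases (x n) (fun i => (T i)^[n] (y n)) j : X) := by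
        rw [Fin.sum_univ_succ]; simp
      rw [hrw]
      refine hKco.sum_mem (fun j _ => halo.le.trans (ha j n).1) (hasum n) (fun j _ => ?_)
      induction j using Fin.cases with
      | zero => simpa using ih
      | succ i => simpa using (hTK i).iterate n (hmemy n ih)
  -- affine upper bounds on the gauges
  have hψle : ∀ i t, 0 ≤ t → ψ i t ≤ ψ i (N i) + Ns i * t := by
    intro i t ht
    rcases le_total t (N i) with h | h
    · have h1 := (hψmono i).monotoneOn (Set.mem_Ici.2 ht) (Set.mem_Ici.2 (hN i).le) h
      have h2 : 0 ≤ Ns i * t := mul_nonneg (hNs i).le ht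
      linarith
    · have h2 := hψbound i t h
      have h3 := hψpos i (N i) (hN i).le
      linarith
  have hφle : ∀ i t, 0 ≤ t → φ i t ≤ φ i (M i) + Ms i * t := by
    intro i t ht
    rcases le_total t (M i) with h | h
    · have h1 := (hφmono i).monotoneOn (Set.mem_Ici.2 ht) (Set.mem_Ici.2 (hM i).le) h
      have h2 : 0 ≤ Ms i * t := mul_nonneg (hMs i).le ht
      linarith
    · have h2 := hφbound i t h
      have h3 := hφpos i (M i) (hM i).le
      linarith
  -- basic estimates against the common fixed point
  have hIest : ∀ i n, 1 ≤ n → ∀ z, z ∈ K →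
      ‖(I i)^[n] z - p‖ ≤ (1 + tμ i n * Ns i) * ‖z - p‖ + (tμ i n * ψ i (N i) + tlam i n) := by
    intro i n hn z hz
    have h1 := hI i n hn z hz p hpK
    rw [hIp i n] at h1
    have h2 := hψle i ‖z - p‖ (norm_nonneg _)
    have h3 := mul_le_mul_of_nonneg_left h2 (htμ0 i n)
    nlinarith [norm_nonneg (z - p)]
  have hTest : ∀ i n, 1 ≤ n → ∀ z, z ∈ K →
      ‖(T i)^[n] z - p‖ ≤ (1 + μ i n * Ms i) *
        ((1 + tμ i n * Ns i) * ‖z - p‖ + (tμ i n * ψ i (N i) + tlam i n))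
        + (μ i n * φ i (M i) + lam i n) := by
    intro i n hn z hz
    have h1 := hT i n hn z hz p hpK
    rw [hTp i n, hIp i n] at h1
    have h2 := hφle i ‖(I i)^[n] z - p‖ (norm_nonneg _)
    have h3 := mul_le_mul_of_nonneg_left h2 (hμ0 i n)
    have h4 := hIest i n hn z hz
    have h5 : (0:ℝ) ≤ 1 + μ i n * Ms i := by nlinarith [mul_nonneg (hμ0 i n) (hMs i).le]
    nlinarith [mul_le_mul_of_nonneg_left h4 h5, norm_nonneg ((I i)^[n] z - p)]
  -- nonnegativity of the error sums
  have hU0 : ∀ n, (0:ℝ) ≤ ∑ i : Fin m, tμ i n * Ns i :=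
    fun n => Finset.sum_nonneg fun i _ => mul_nonneg (htμ0 i n) (hNs i).le
  have hV0 : ∀ n, (0:ℝ) ≤ ∑ i : Fin m, (tμ i n * ψ i (N i) + tlam i n) :=
    fun n => Finset.sum_nonneg fun i _ =>
      add_nonneg (mul_nonneg (htμ0 i n) (hψpos i (N i) (hN i).le)) (htlam0 i n)
  have hW0 : ∀ n, (0:ℝ) ≤ ∑ i : Fin m, μ i n * Ms i :=
    fun n => Finset.sum_nonneg fun i _ => mul_nonneg (hμ0 i n) (hMs i).le
  have hR0 : ∀ n, (0:ℝ) ≤ ∑ i : Fin m, (μ i n * φ i (M i) + lam i n) :=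
    fun n => Finset.sum_nonneg fun i _ =>
      add_nonneg (mul_nonneg (hμ0 i n) (hφpos i (M i) (hM i).le)) (hlam0 i n)
  -- the uniform constants
  have husum : ∀ i : Fin m, Summable (fun k => tμ i k * Ns i) := fun i => (htμsum i).mul_right _
  have hwsum : ∀ i : Fin m, Summable (fun k => μ i k * Ms i) := fun i => (hμsum i).mul_right _
  have hvsum : ∀ i : Fin m, Summable (fun k => tμ i k * ψ i (N i) + tlam i k) := fun i =>
    ((htμsum i).mul_right _).add (htlamsum i)
  have hrsum : ∀ i : Fin m, Summable (fun k => μ i k * φ i (M i) + lam i k) := fun i =>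
    ((hμsum i).mul_right _).add (hlamsum i)
  obtain ⟨C, hC0, hCw, hCU⟩ : ∃ C : ℝ, 0 ≤ C ∧ (∀ i n, μ i n * Ms i ≤ C) ∧
      (∀ n, ∑ i : Fin m, tμ i n * Ns i ≤ C) := by
    refine ⟨1 + (∑ i : Fin m, ∑' k, tμ i k * Ns i) + (∑ i : Fin m, ∑' k, μ i k * Ms i),
      ?_, ?_, ?_⟩
    · have h1 : (0:ℝ) ≤ ∑ i : Fin m, ∑' k, tμ i k * Ns i :=
        Finset.sum_nonneg fun i _ => tsum_nonneg fun k => mul_nonneg (htμ0 i k) (hNs i).le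
      have h2 : (0:ℝ) ≤ ∑ i : Fin m, ∑' k, μ i k * Ms i :=
        Finset.sum_nonneg fun i _ => tsum_nonneg fun k => mul_nonneg (hμ0 i k) (hMs i).le
      linarith
    · intro i n
      have h1 : μ i n * Ms i ≤ ∑' k, μ i k * Ms i :=
        Summable.le_tsum (hwsum i) n fun j _ => mul_nonneg (hμ0 i j) (hMs i).le
      have h2 : ∑' k, μ i k * Ms i ≤ ∑ i' : Fin m, ∑' k, μ i' k * Ms i' :=
        Finset.single_le_sum (f := fun i' => ∑' k, μ i' k * Ms i')
          (fun i' _ => tsum_nonneg fun k => mul_nonneg (hμ0 i' k) (hMs i').le)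
          (Finset.mem_univ i)
      have h3 : (0:ℝ) ≤ ∑ i : Fin m, ∑' k, tμ i k * Ns i :=
        Finset.sum_nonneg fun i _ => tsum_nonneg fun k => mul_nonneg (htμ0 i k) (hNs i).le
      linarith
    · intro n
      have h1 : ∑ i : Fin m, tμ i n * Ns i ≤ ∑ i : Fin m, ∑' k, tμ i k * Ns i :=
        Finset.sum_le_sum fun i _ =>
          Summable.le_tsum (husum i) n fun j _ => mul_nonneg (htμ0 i j) (hNs i).le
      have h2 : (0:ℝ) ≤ ∑ i : Fin m, ∑' k, μ i k * Ms i :=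
        Finset.sum_nonneg fun i _ => tsum_nonneg fun k => mul_nonneg (hμ0 i k) (hMs i).le
      linarith
  obtain ⟨CV, hCV0, hCV'⟩ : ∃ CV : ℝ, 0 ≤ CV ∧
      ∀ n, ∑ i : Fin m, (tμ i n * ψ i (N i) + tlam i n) ≤ CV := by
    refine ⟨∑ i : Fin m, ∑' k, (tμ i k * ψ i (N i) + tlam i k), ?_, ?_⟩
    · exact Finset.sum_nonneg fun i _ => tsum_nonneg fun k =>
        add_nonneg (mul_nonneg (htμ0 i k) (hψpos i (N i) (hN i).le)) (htlam0 i k)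
    · intro n
      exact Finset.sum_le_sum fun i _ =>
        Summable.le_tsum (hvsum i) n fun j _ =>
          add_nonneg (mul_nonneg (htμ0 i j) (hψpos i (N i) (hN i).le)) (htlam0 i j)
  -- norm of convex-type combinations
  have hnorm_comb : ∀ (c0 : ℝ) (w : Fin m → ℝ) (u0 : X) (uu : Fin m → X), 0 ≤ c0 →
      (∀ i, 0 ≤ w i) →
      ‖c0 • u0 + ∑ i : Fin m, w i • uu i‖ ≤ c0 * ‖u0‖ + ∑ i : Fin m, w i * ‖uu i‖ := by
    intro c0 w u0 uu hc0 hw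
    refine (norm_add_le _ _).trans ?_
    rw [norm_smul, Real.norm_of_nonneg hc0]
    gcongr
    refine (norm_sum_le _ _).trans ?_
    refine le_of_eq (Finset.sum_congr rfl fun i _ => ?_)
    rw [norm_smul, Real.norm_of_nonneg (hw i)]
  -- estimate for y
  have hBle : ∀ n, 1 ≤ n → ‖y n - p‖ ≤ (1 + ∑ i : Fin m, tμ i n * Ns i) * ‖x n - p‖
      + ∑ i : Fin m, (tμ i n * ψ i (N i) + tlam i n) := by
    intro n hn
    have hs := hbsum n
    rw [Fin.sum_univ_succ] at hs
    have hbid : y n - p = b 0 n • (x n - p)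
        + ∑ i : Fin m, b i.succ n • ((I i)^[n] (x n) - p) := by
      rw [hy n]
      have h1 : b 0 n • (x n - p) + ∑ i : Fin m, b i.succ n • ((I i)^[n] (x n) - p)
          = (b 0 n • x n + ∑ i : Fin m, b i.succ n • (I i)^[n] (x n))
            - (b 0 n + ∑ i : Fin m, b i.succ n) • p := by
        rw [add_smul, Finset.sum_smul]
        simp only [smul_sub, Finset.sum_sub_distrib]
        abel
      rw [h1, hs, one_smul]
    calc ‖y n - p‖
        = ‖b 0 n • (x n - p) + ∑ i : Fin m, b i.succ n • ((I i)^[n] (x n) - p)‖ := by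
          rw [hbid]
      _ ≤ b 0 n * ‖x n - p‖ + ∑ i : Fin m, b i.succ n * ‖(I i)^[n] (x n) - p‖ :=
          hnorm_comb _ _ _ _ (hblo.le.trans (hb 0 n).1) (fun i => hblo.le.trans (hb i.succ n).1)
      _ ≤ b 0 n * ‖x n - p‖ + ∑ i : Fin m, (b i.succ n * ‖x n - p‖
            + (tμ i n * Ns i * ‖x n - p‖ + (tμ i n * ψ i (N i) + tlam i n))) := by
          refine add_le_add_right (Finset.sum_le_sum fun i _ => ?_) _
          have hE := hIest i n hn (x n) (hmemx n)
          have hb1 : b i.succ n ≤ 1 := (hb i.succ n).2.trans hbhi1.le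
          have hb0' : 0 ≤ b i.succ n := hblo.le.trans (hb i.succ n).1
          have hu0 : 0 ≤ tμ i n * Ns i := mul_nonneg (htμ0 i n) (hNs i).le
          have hv0 : 0 ≤ tμ i n * ψ i (N i) + tlam i n :=
            add_nonneg (mul_nonneg (htμ0 i n) (hψpos i (N i) (hN i).le)) (htlam0 i n)
          have hA0 : (0:ℝ) ≤ ‖x n - p‖ := norm_nonneg _
          nlinarith [mul_le_mul_of_nonneg_left hE hb0',
            mul_nonneg (sub_nonneg.2 hb1) (add_nonneg (mul_nonneg hu0 hA0) hv0)]
      _ = (1 + ∑ i : Fin m, tμ i n * Ns i) * ‖x n - p‖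
            + ∑ i : Fin m, (tμ i n * ψ i (N i) + tlam i n) := by
          rw [Finset.sum_add_distrib, Finset.sum_add_distrib, ← Finset.sum_mul,
            ← Finset.sum_mul]
          have hsb : ∑ i : Fin m, b i.succ n = 1 - b 0 n := by linarith
          rw [hsb]; ring
  -- per-index estimate for the T-terms, with coefficient a
  have hTyle : ∀ n, 1 ≤ n → ∀ i : Fin m,
      a i.succ n * ‖(T i)^[n] (y n) - p‖ ≤
        a i.succ n * ‖y n - p‖ + ((1 + C) * (μ i n * Ms i + tμ i n * Ns i) * ‖y n - p‖
          + ((1 + C) * (tμ i n * ψ i (N i) + tlam i n) + (μ i n * φ i (M i) + lam i n))) := by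
    intro n hn i
    have hE := hTest i n hn (y n) (hmemy n (hmemx n))
    have ha1 : a i.succ n ≤ 1 := (ha i.succ n).2.trans hahi1.le
    have ha0' : 0 ≤ a i.succ n := halo.le.trans (ha i.succ n).1
    have hw0 : 0 ≤ μ i n * Ms i := mul_nonneg (hμ0 i n) (hMs i).le
    have hu0 : 0 ≤ tμ i n * Ns i := mul_nonneg (htμ0 i n) (hNs i).le
    have hv0 : 0 ≤ tμ i n * ψ i (N i) + tlam i n :=
      add_nonneg (mul_nonneg (htμ0 i n) (hψpos i (N i) (hN i).le)) (htlam0 i n)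
    have hr0 : 0 ≤ μ i n * φ i (M i) + lam i n :=
      add_nonneg (mul_nonneg (hμ0 i n) (hφpos i (M i) (hM i).le)) (hlam0 i n)
    have hB0 : (0:ℝ) ≤ ‖y n - p‖ := norm_nonneg _
    have hwC := hCw i n
    have hC0' := hC0
    have k1 : a i.succ n * ‖(T i)^[n] (y n) - p‖ ≤
        a i.succ n * ((1 + μ i n * Ms i) *
          ((1 + tμ i n * Ns i) * ‖y n - p‖ + (tμ i n * ψ i (N i) + tlam i n))
          + (μ i n * φ i (M i) + lam i n)) := mul_le_mul_of_nonneg_left hE ha0'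
    have hcoef : a i.succ n * ((1 + μ i n * Ms i) * (1 + tμ i n * Ns i))
        ≤ a i.succ n + (1 + C) * (μ i n * Ms i + tμ i n * Ns i) := by
      nlinarith [mul_nonneg (sub_nonneg.2 ha1) (add_nonneg hw0 hu0),
        mul_nonneg (sub_nonneg.2 hwC) hu0, mul_nonneg hC0' hw0,
        mul_nonneg (mul_nonneg (sub_nonneg.2 ha1) hw0) hu0]
    have s1 : a i.succ n * ((1 + μ i n * Ms i) * (1 + tμ i n * Ns i)) * ‖y n - p‖
        ≤ (a i.succ n + (1 + C) * (μ i n * Ms i + tμ i n * Ns i)) * ‖y n - p‖ :=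
      mul_le_mul_of_nonneg_right hcoef hB0
    have s2 : a i.succ n * ((1 + μ i n * Ms i) * (tμ i n * ψ i (N i) + tlam i n))
        ≤ (1 + C) * (tμ i n * ψ i (N i) + tlam i n) := by
      nlinarith [mul_nonneg (sub_nonneg.2 ha1) hv0, mul_nonneg (sub_nonneg.2 hwC) hv0,
        mul_nonneg (mul_nonneg (sub_nonneg.2 ha1) hw0) hv0]
    have s3 : a i.succ n * (μ i n * φ i (M i) + lam i n) ≤ μ i n * φ i (M i) + lam i n := by
      nlinarith [mul_nonneg (sub_nonneg.2 ha1) hr0]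
    nlinarith [k1, s1, s2, s3]
  -- summed estimate for the T-terms
  have hSle : ∀ n, 1 ≤ n →
      ∑ i : Fin m, a i.succ n * ‖(T i)^[n] (y n) - p‖ ≤
        (1 - a 0 n) * ‖y n - p‖
          + ((1 + C) * ((∑ i : Fin m, μ i n * Ms i) + ∑ i : Fin m, tμ i n * Ns i) * ‖y n - p‖
            + ((1 + C) * (∑ i : Fin m, (tμ i n * ψ i (N i) + tlam i n))
              + ∑ i : Fin m, (μ i n * φ i (M i) + lam i n))) := by
    intro n hn
    have hs := hasum n
    rw [Fin.sum_univ_succ] at hs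
    have hsa : ∑ i : Fin m, a i.succ n = 1 - a 0 n := by linarith
    calc ∑ i : Fin m, a i.succ n * ‖(T i)^[n] (y n) - p‖
        ≤ ∑ i : Fin m, (a i.succ n * ‖y n - p‖
            + ((1 + C) * (μ i n * Ms i + tμ i n * Ns i) * ‖y n - p‖
              + ((1 + C) * (tμ i n * ψ i (N i) + tlam i n)
                + (μ i n * φ i (M i) + lam i n)))) :=
          Finset.sum_le_sum fun i _ => hTyle n hn i
      _ = (∑ i : Fin m, a i.succ n) * ‖y n - p‖
            + ((1 + C) * (∑ i : Fin m, (μ i n * Ms i + tμ i n * Ns i)) * ‖y n - p‖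
              + ((1 + C) * (∑ i : Fin m, (tμ i n * ψ i (N i) + tlam i n))
                + ∑ i : Fin m, (μ i n * φ i (M i) + lam i n))) := by
          rw [Finset.sum_add_distrib, Finset.sum_add_distrib, Finset.sum_add_distrib,
            ← Finset.sum_mul, ← Finset.sum_mul, ← Finset.mul_sum, ← Finset.mul_sum]
      _ = (1 - a 0 n) * ‖y n - p‖
            + ((1 + C) * ((∑ i : Fin m, μ i n * Ms i) + ∑ i : Fin m, tμ i n * Ns i) * ‖y n - p‖
              + ((1 + C) * (∑ i : Fin m, (tμ i n * ψ i (N i) + tlam i n))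
                + ∑ i : Fin m, (μ i n * φ i (M i) + lam i n))) := by
          rw [hsa, Finset.sum_add_distrib]
  -- the recursion for x
  have hAineq : ∀ n, ‖x (n + 1) - p‖ ≤ a 0 n * ‖x n - p‖
      + ∑ i : Fin m, a i.succ n * ‖(T i)^[n] (y n) - p‖ := by
    intro n
    have hs := hasum n
    rw [Fin.sum_univ_succ] at hs
    have haid : x (n + 1) - p = a 0 n • (x n - p)
        + ∑ i : Fin m, a i.succ n • ((T i)^[n] (y n) - p) := by
      rw [hxrec n]
      have h1 : a 0 n • (x n - p) + ∑ i : Fin m, a i.succ n • ((T i)^[n] (y n) - p)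
          = (a 0 n • x n + ∑ i : Fin m, a i.succ n • (T i)^[n] (y n))
            - (a 0 n + ∑ i : Fin m, a i.succ n) • p := by
        rw [add_smul, Finset.sum_smul]
        simp only [smul_sub, Finset.sum_sub_distrib]
        abel
      rw [h1, hs, one_smul]
    rw [haid]
    exact hnorm_comb _ _ _ _ (halo.le.trans (ha 0 n).1) (fun i => halo.le.trans (ha i.succ n).1)
  -- the auxiliary sequence z
  have ha0lo : ∀ n, alo ≤ a 0 n := fun n => (ha 0 n).1
  have ha0hi : ∀ n, a 0 n ≤ ahi := fun n => (ha 0 n).2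
  have hqpos : (0:ℝ) < 1 - ahi := by linarith
  have hq : ∀ n, 1 - ahi ≤ 1 - a 0 n := fun n => by linarith [ha0hi n]
  have h1a0 : ∀ n, (0:ℝ) < 1 - a 0 n := fun n => lt_of_lt_of_le hqpos (hq n)
  set z : ℕ → X := fun n => (1 - a 0 n)⁻¹ • ∑ i : Fin m, a i.succ n • (T i)^[n] (y n)
    with hzdef
  have hxz : ∀ n, x (n + 1) = a 0 n • x n + (1 - a 0 n) • z n := by
    intro n
    rw [hxrec n, hzdef]
    simp only []
    rw [smul_smul, mul_inv_cancel₀ (h1a0 n).ne', one_smul]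
  have hzid : ∀ n, z n - p
      = (1 - a 0 n)⁻¹ • ∑ i : Fin m, a i.succ n • ((T i)^[n] (y n) - p) := by
    intro n
    have hs := hasum n
    rw [Fin.sum_univ_succ] at hs
    have hsa : ∑ i : Fin m, a i.succ n = 1 - a 0 n := by linarith
    have h1 : ∑ i : Fin m, a i.succ n • ((T i)^[n] (y n) - p)
        = (∑ i : Fin m, a i.succ n • (T i)^[n] (y n)) - (1 - a 0 n) • p := by
      simp only [smul_sub, Finset.sum_sub_distrib, ← Finset.sum_smul]
      rw [hsa]
    rw [h1, smul_sub, smul_smul, inv_mul_cancel₀ (h1a0 n).ne', one_smul, hzdef]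
  -- estimate for z against p
  have hzle : ∀ n, 1 ≤ n → ‖z n - p‖ ≤ ‖y n - p‖ + (1 - ahi)⁻¹ *
      ((1 + C) * ((∑ i : Fin m, μ i n * Ms i) + ∑ i : Fin m, tμ i n * Ns i) * ‖y n - p‖
        + ((1 + C) * (∑ i : Fin m, (tμ i n * ψ i (N i) + tlam i n))
          + ∑ i : Fin m, (μ i n * φ i (M i) + lam i n))) := by
    intro n hn
    have h1 : ‖z n - p‖
        = (1 - a 0 n)⁻¹ * ‖∑ i : Fin m, a i.succ n • ((T i)^[n] (y n) - p)‖ := by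
      rw [hzid n, norm_smul, Real.norm_of_nonneg (inv_nonneg.2 (h1a0 n).le)]
    have h2 : ‖∑ i : Fin m, a i.succ n • ((T i)^[n] (y n) - p)‖
        ≤ ∑ i : Fin m, a i.succ n * ‖(T i)^[n] (y n) - p‖ := by
      refine (norm_sum_le _ _).trans (le_of_eq (Finset.sum_congr rfl fun i _ => ?_))
      rw [norm_smul, Real.norm_of_nonneg (halo.le.trans (ha i.succ n).1)]
    have h3 := hSle n hn
    have hB0 : (0:ℝ) ≤ ‖y n - p‖ := norm_nonneg _
    have hD0 : (0:ℝ) ≤ (1 + C) * ((∑ i : Fin m, μ i n * Ms i) + ∑ i : Fin m, tμ i n * Ns i)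
        * ‖y n - p‖ + ((1 + C) * (∑ i : Fin m, (tμ i n * ψ i (N i) + tlam i n))
          + ∑ i : Fin m, (μ i n * φ i (M i) + lam i n)) := by
      have := hW0 n; have := hU0 n; have := hV0 n; have := hR0 n
      positivity
    have h4 : ‖z n - p‖ ≤ (1 - a 0 n)⁻¹ * ((1 - a 0 n) * ‖y n - p‖
        + ((1 + C) * ((∑ i : Fin m, μ i n * Ms i) + ∑ i : Fin m, tμ i n * Ns i) * ‖y n - p‖
          + ((1 + C) * (∑ i : Fin m, (tμ i n * ψ i (N i) + tlam i n))
            + ∑ i : Fin m, (μ i n * φ i (M i) + lam i n)))) := by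
      rw [h1]
      exact mul_le_mul_of_nonneg_left (h2.trans h3) (inv_nonneg.2 (h1a0 n).le)
    have h5 : (1 - a 0 n)⁻¹ * ((1 - a 0 n) * ‖y n - p‖
        + ((1 + C) * ((∑ i : Fin m, μ i n * Ms i) + ∑ i : Fin m, tμ i n * Ns i) * ‖y n - p‖
          + ((1 + C) * (∑ i : Fin m, (tμ i n * ψ i (N i) + tlam i n))
            + ∑ i : Fin m, (μ i n * φ i (M i) + lam i n))))
        = ‖y n - p‖ + (1 - a 0 n)⁻¹ *
          ((1 + C) * ((∑ i : Fin m, μ i n * Ms i) + ∑ i : Fin m, tμ i n * Ns i) * ‖y n - p‖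
            + ((1 + C) * (∑ i : Fin m, (tμ i n * ψ i (N i) + tlam i n))
              + ∑ i : Fin m, (μ i n * φ i (M i) + lam i n))) := by
      rw [mul_add, ← mul_assoc, inv_mul_cancel₀ (h1a0 n).ne', one_mul]
    have h6 : (1 - a 0 n)⁻¹ ≤ (1 - ahi)⁻¹ := inv_anti₀ hqpos (hq n)
    have h7 := mul_le_mul_of_nonneg_right h6 hD0
    linarith
  -- summability and limits of the error sequences
  have hUsum : Summable (fun n => (∑ i : Fin m, tμ i n * Ns i)) := summable_sum fun i _ => husum i
  have hVsum : Summable (fun n => (∑ i : Fin m, (tμ i n * ψ i (N i) + tlam i n))) := summable_sum fun i _ => hvsum i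
  have hWsum : Summable (fun n => (∑ i : Fin m, μ i n * Ms i)) := summable_sum fun i _ => hwsum i
  have hRsum : Summable (fun n => (∑ i : Fin m, (μ i n * φ i (M i) + lam i n))) := summable_sum fun i _ => hrsum i
  have hUlim : Tendsto (fun n => (∑ i : Fin m, tμ i n * Ns i)) atTop (nhds 0) := by
    have := tendsto_finset_sum (Finset.univ (α := Fin m))
      (f := fun i n => tμ i n * Ns i) (fun i _ => (htμlim i).mul_const (Ns i))
    simpa using this
  have hVlim : Tendsto (fun n => (∑ i : Fin m, (tμ i n * ψ i (N i) + tlam i n))) atTop (nhds 0) := by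
    have := tendsto_finset_sum (Finset.univ (α := Fin m))
      (f := fun i n => tμ i n * ψ i (N i) + tlam i n)
      (fun i _ => ((htμlim i).mul_const (ψ i (N i))).add (htlamlim i))
    simpa using this
  have hWlim : Tendsto (fun n => (∑ i : Fin m, μ i n * Ms i)) atTop (nhds 0) := by
    have := tendsto_finset_sum (Finset.univ (α := Fin m))
      (f := fun i n => μ i n * Ms i) (fun i _ => (hμlim i).mul_const (Ms i))
    simpa using this
  have hRlim : Tendsto (fun n => (∑ i : Fin m, (μ i n * φ i (M i) + lam i n))) atTop (nhds 0) := by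
    have := tendsto_finset_sum (Finset.univ (α := Fin m))
      (f := fun i n => μ i n * φ i (M i) + lam i n)
      (fun i _ => ((hμlim i).mul_const (φ i (M i))).add (hlamlim i))
    simpa using this
  -- the one-step recursion
  have hArec : ∀ n, 1 ≤ n → ‖x (n + 1) - p‖ ≤ (1 + ((∑ i : Fin m, tμ i n * Ns i) + (1 + C) ^ 2 * ((∑ i : Fin m, μ i n * Ms i) + (∑ i : Fin m, tμ i n * Ns i)))) * ‖x n - p‖ + ((∑ i : Fin m, (tμ i n * ψ i (N i) + tlam i n)) + ((1 + C) * ((∑ i : Fin m, μ i n * Ms i) + (∑ i : Fin m, tμ i n * Ns i)) * CV + ((1 + C) * (∑ i : Fin m, (tμ i n * ψ i (N i) + tlam i n)) + (∑ i : Fin m, (μ i n * φ i (M i) + lam i n))))) := by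
    intro n hn
    have h1 := hAineq n
    have h2 := hSle n hn
    have h3 := hBle n hn
    have hA0 : (0:ℝ) ≤ ‖x n - p‖ := norm_nonneg _
    have hB0 : (0:ℝ) ≤ ‖y n - p‖ := norm_nonneg _
    have hU0' := hU0 n
    have hV0' := hV0 n
    have hW0' := hW0 n
    have hR0' := hR0 n
    have ha00 : (0:ℝ) ≤ a 0 n := halo.le.trans (ha0lo n)
    have hB' : ‖y n - p‖ ≤ (1 + C) * ‖x n - p‖ + CV := by
      nlinarith [mul_nonneg (sub_nonneg.2 (hCU n)) hA0, hCV' n]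
    have e1 : (1 - a 0 n) * ‖y n - p‖
        ≤ (1 - a 0 n) * ((1 + (∑ i : Fin m, tμ i n * Ns i)) * ‖x n - p‖ + (∑ i : Fin m, (tμ i n * ψ i (N i) + tlam i n))) :=
      mul_le_mul_of_nonneg_left h3 (h1a0 n).le
    have e2 : a 0 n * ‖x n - p‖ + (1 - a 0 n) * ((1 + (∑ i : Fin m, tμ i n * Ns i)) * ‖x n - p‖ + (∑ i : Fin m, (tμ i n * ψ i (N i) + tlam i n)))
        ≤ (1 + (∑ i : Fin m, tμ i n * Ns i)) * ‖x n - p‖ + (∑ i : Fin m, (tμ i n * ψ i (N i) + tlam i n)) := by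
      nlinarith [mul_nonneg (mul_nonneg ha00 hU0') hA0, mul_nonneg ha00 hV0']
    have h1C0 : (0:ℝ) ≤ 1 + C := by linarith
    have e3 : (1 + C) * ((∑ i : Fin m, μ i n * Ms i) + (∑ i : Fin m, tμ i n * Ns i)) * ‖y n - p‖
        ≤ (1 + C) * ((∑ i : Fin m, μ i n * Ms i) + (∑ i : Fin m, tμ i n * Ns i)) * ((1 + C) * ‖x n - p‖ + CV) :=
      mul_le_mul_of_nonneg_left hB' (mul_nonneg h1C0 (by linarith))
    nlinarith [h1, h2, e1, e2, e3]
  -- nonnegativity of the recursion coefficients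
  have hσf0 : ∀ n, (0:ℝ) ≤ ((∑ i : Fin m, tμ i n * Ns i) + (1 + C) ^ 2 * ((∑ i : Fin m, μ i n * Ms i) + (∑ i : Fin m, tμ i n * Ns i))) := by
    intro n
    exact add_nonneg (hU0 n) (mul_nonneg (sq_nonneg _) (add_nonneg (hW0 n) (hU0 n)))
  have h1C0 : (0:ℝ) ≤ 1 + C := by linarith
  have hθf0 : ∀ n, (0:ℝ) ≤ ((∑ i : Fin m, (tμ i n * ψ i (N i) + tlam i n)) + ((1 + C) * ((∑ i : Fin m, μ i n * Ms i) + (∑ i : Fin m, tμ i n * Ns i)) * CV + ((1 + C) * (∑ i : Fin m, (tμ i n * ψ i (N i) + tlam i n)) + (∑ i : Fin m, (μ i n * φ i (M i) + lam i n))))) := by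
    intro n
    exact add_nonneg (hV0 n) (add_nonneg
      (mul_nonneg (mul_nonneg h1C0 (add_nonneg (hW0 n) (hU0 n))) hCV0)
      (add_nonneg (mul_nonneg h1C0 (hV0 n)) (hR0 n)))
  have hσfsum : Summable (fun n => ((∑ i : Fin m, tμ i n * Ns i) + (1 + C) ^ 2 * ((∑ i : Fin m, μ i n * Ms i) + (∑ i : Fin m, tμ i n * Ns i)))) :=
    hUsum.add ((hWsum.add hUsum).mul_left _)
  have hθfsum : Summable (fun n => ((∑ i : Fin m, (tμ i n * ψ i (N i) + tlam i n)) + ((1 + C) * ((∑ i : Fin m, μ i n * Ms i) + (∑ i : Fin m, tμ i n * Ns i)) * CV + ((1 + C) * (∑ i : Fin m, (tμ i n * ψ i (N i) + tlam i n)) + (∑ i : Fin m, (μ i n * φ i (M i) + lam i n)))))) :=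
    hVsum.add ((((hWsum.add hUsum).mul_left ((1:ℝ) + C)).mul_right CV).add
      ((hVsum.mul_left _).add hRsum))
  -- convergence of ‖x n - p‖
  obtain ⟨c, hc⟩ := quasi_conv (fun k => ‖x (k + 1) - p‖)
    (fun k => ((∑ i : Fin m, tμ i (k + 1) * Ns i) + (1 + C) ^ 2 * ((∑ i : Fin m, μ i (k + 1) * Ms i) + (∑ i : Fin m, tμ i (k + 1) * Ns i)))) (fun k => ((∑ i : Fin m, (tμ i (k + 1) * ψ i (N i) + tlam i (k + 1))) + ((1 + C) * ((∑ i : Fin m, μ i (k + 1) * Ms i) + (∑ i : Fin m, tμ i (k + 1) * Ns i)) * CV + ((1 + C) * (∑ i : Fin m, (tμ i (k + 1) * ψ i (N i) + tlam i (k + 1))) + (∑ i : Fin m, (μ i (k + 1) * φ i (M i) + lam i (k + 1)))))))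
    (fun k => norm_nonneg _) (fun k => hσf0 (k + 1)) (fun k => hθf0 (k + 1))
    ((summable_nat_add_iff 1).2 hσfsum) ((summable_nat_add_iff 1).2 hθfsum)
    (fun k => hArec (k + 1) (by omega))
  have hAc : Tendsto (fun n => ‖x n - p‖) atTop (nhds c) :=
    (tendsto_add_atTop_iff_nat 1).1 hc
  have hc0 : 0 ≤ c := ge_of_tendsto' hAc fun n => norm_nonneg _
  -- the upper bounding sequence for ‖z n - p‖
  have hzb : ∀ n, 1 ≤ n → ‖z n - p‖ ≤ ((1 + (∑ i : Fin m, tμ i n * Ns i)) * ‖x n - p‖ + (∑ i : Fin m, (tμ i n * ψ i (N i) + tlam i n)) + (1 - ahi)⁻¹ * ((1 + C) * ((∑ i : Fin m, μ i n * Ms i) + (∑ i : Fin m, tμ i n * Ns i)) * ((1 + C) * ‖x n - p‖ + CV) + ((1 + C) * (∑ i : Fin m, (tμ i n * ψ i (N i) + tlam i n)) + (∑ i : Fin m, (μ i n * φ i (M i) + lam i n))))) := by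
    intro n hn
    have h0 := hzle n hn
    have h3 := hBle n hn
    have hA0 : (0:ℝ) ≤ ‖x n - p‖ := norm_nonneg _
    have hB0 : (0:ℝ) ≤ ‖y n - p‖ := norm_nonneg _
    have hB' : ‖y n - p‖ ≤ (1 + C) * ‖x n - p‖ + CV := by
      nlinarith [mul_nonneg (sub_nonneg.2 (hCU n)) hA0, hCV' n]
    have e3 : (1 + C) * ((∑ i : Fin m, μ i n * Ms i) + (∑ i : Fin m, tμ i n * Ns i)) * ‖y n - p‖
        ≤ (1 + C) * ((∑ i : Fin m, μ i n * Ms i) + (∑ i : Fin m, tμ i n * Ns i)) * ((1 + C) * ‖x n - p‖ + CV) :=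
      mul_le_mul_of_nonneg_left hB'
        (mul_nonneg h1C0 (add_nonneg (hW0 n) (hU0 n)))
    have e4 : (1 - ahi)⁻¹ * ((1 + C) * ((∑ i : Fin m, μ i n * Ms i) + (∑ i : Fin m, tμ i n * Ns i)) * ‖y n - p‖
          + ((1 + C) * (∑ i : Fin m, (tμ i n * ψ i (N i) + tlam i n)) + (∑ i : Fin m, (μ i n * φ i (M i) + lam i n))))
        ≤ (1 - ahi)⁻¹ * ((1 + C) * ((∑ i : Fin m, μ i n * Ms i) + (∑ i : Fin m, tμ i n * Ns i)) * ((1 + C) * ‖x n - p‖ + CV)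
          + ((1 + C) * (∑ i : Fin m, (tμ i n * ψ i (N i) + tlam i n)) + (∑ i : Fin m, (μ i n * φ i (M i) + lam i n)))) :=
      mul_le_mul_of_nonneg_left (by linarith) (inv_nonneg.2 hqpos.le)
    linarith
  have hglim : Tendsto (fun n => ((1 + (∑ i : Fin m, tμ i n * Ns i)) * ‖x n - p‖ + (∑ i : Fin m, (tμ i n * ψ i (N i) + tlam i n)) + (1 - ahi)⁻¹ * ((1 + C) * ((∑ i : Fin m, μ i n * Ms i) + (∑ i : Fin m, tμ i n * Ns i)) * ((1 + C) * ‖x n - p‖ + CV) + ((1 + C) * (∑ i : Fin m, (tμ i n * ψ i (N i) + tlam i n)) + (∑ i : Fin m, (μ i n * φ i (M i) + lam i n)))))) atTop (nhds c) := by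
    have t3 : Tendsto (fun n => (1 + (∑ i : Fin m, tμ i n * Ns i)) * ‖x n - p‖ + (∑ i : Fin m, (tμ i n * ψ i (N i) + tlam i n))) atTop
        (nhds ((1 + 0) * c + 0)) := ((tendsto_const_nhds.add hUlim).mul hAc).add hVlim
    have t4 : Tendsto (fun n => (1 + C) * ‖x n - p‖ + CV) atTop (nhds ((1 + C) * c + CV)) :=
      (hAc.const_mul _).add tendsto_const_nhds
    have t6 : Tendsto (fun n => (1 + C) * ((∑ i : Fin m, μ i n * Ms i) + (∑ i : Fin m, tμ i n * Ns i))) atTop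
        (nhds ((1 + C) * (0 + 0))) := (hWlim.add hUlim).const_mul _
    have t8 : Tendsto (fun n => (1 + C) * (∑ i : Fin m, (tμ i n * ψ i (N i) + tlam i n)) + (∑ i : Fin m, (μ i n * φ i (M i) + lam i n))) atTop
        (nhds ((1 + C) * 0 + 0)) := (hVlim.const_mul _).add hRlim
    have t9 := ((t6.mul t4).add t8).const_mul ((1 - ahi)⁻¹)
    have := t3.add t9
    simpa using this
  -- apply the Schu-type lemma
  have huS : ∀ ε > (0:ℝ), ∀ᶠ n in atTop, ‖x n - p‖ ≤ c + ε := fun ε hε =>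
    (hAc.eventually_lt_const (by linarith : c < c + ε)).mono fun n h => h.le
  have hvS : ∀ ε > (0:ℝ), ∀ᶠ n in atTop, ‖z n - p‖ ≤ c + ε := by
    intro ε hε
    filter_upwards [eventually_ge_atTop 1,
      hglim.eventually_lt_const (by linarith : c < c + ε)] with n h1 h2
    exact (hzb n h1).trans h2.le
  have hidw : ∀ n, a 0 n • (x n - p) + (1 - a 0 n) • (z n - p) = x (n + 1) - p := by
    intro n
    rw [hxz n]
    module
  have hwS : Tendsto (fun n => ‖a 0 n • (x n - p) + (1 - a 0 n) • (z n - p)‖) atTop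
      (nhds c) := hc.congr fun n => (congrArg norm (hidw n)).symm
  have htsub := schu_lemma halo hahi1 (fun n => a 0 n) (fun n => ha 0 n)
    (fun n => x n - p) (fun n => z n - p) huS hvS hwS
  have hxzlim : Tendsto (fun n => x n - z n) atTop (nhds 0) := htsub.congr fun n => by abel
  have hnormlim : Tendsto (fun n => ‖x n - z n‖) atTop (nhds 0) := by
    simpa using hxzlim.norm
  have hfinle : ∀ n, ‖x (n + 1) - x n‖ ≤ ‖x n - z n‖ := by
    intro n
    have hid2 : x (n + 1) - x n = (1 - a 0 n) • (z n - x n) := by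
      rw [hxz n]; module
    rw [hid2, norm_smul, Real.norm_of_nonneg (h1a0 n).le, norm_sub_rev (z n)]
    have h1 : 1 - a 0 n ≤ 1 := by linarith [ha0lo n]
    nlinarith [norm_nonneg (x n - z n), (h1a0 n).le]
  exact squeeze_zero (fun n => norm_nonneg _) hfinle hnormlim
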